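/- In the monoid O_2 presented by generators α_1, β_1 with relations α_1² = α_1, β_1² = β_1, (α_1β_1)² = α_1β_1, and (β_1α_1)² = β_1α_1, the set of nonidentity elements is exactly {α_1, β_1, α_1β_1, β_1α_1, α_1β_1α_1, β_1α_1β_1}, and these six elements are pairwise distinct; hence |O_2| = 7. -/

import Mathlib

namespace OrigamiTwo

/-- The two generators `α₁` and `β₁` of `O₂`. -/
inductive G2 : Type
  | a : G2
  | b : G2
deriving DecidableEq

open FreeMonoid

/-- The defining relations of `O₂`: idempotence of `α₁`, `β₁`, `α₁β₁`, and `β₁α₁`. -/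
inductive Rel2 : FreeMonoid G2 → FreeMonoid G2 → Prop
  | aa : Rel2 (of G2.a * of G2.a) (of G2.a)
  | bb : Rel2 (of G2.b * of G2.b) (of G2.b)
  | abab : Rel2 (of G2.a * of G2.b * (of G2.a * of G2.b)) (of G2.a * of G2.b)
  | baba : Rel2 (of G2.b * of G2.a * (of G2.b * of G2.a)) (of G2.b * of G2.a)

/-- The congruence generated by the relations of `O₂`. -/
def con2 : Con (FreeMonoid G2) := conGen Rel2

/-- The origami monoid `O₂`. -/
abbrev O2 := con2.Quotient

/-- The generator `α₁` of `O₂`. -/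
def A : O2 := con2.mk' (of G2.a)

/-- The generator `β₁` of `O₂`. -/
def B : O2 := con2.mk' (of G2.b)

/-! ### Auxiliary material -/

lemma rel_of {x y : FreeMonoid G2} (h : Rel2 x y) : con2.mk' x = con2.mk' y :=
  Con.eq _ |>.mpr (ConGen.Rel.of _ _ h)

lemma AA : A * A = A := by
  rw [A, ← map_mul]; exact rel_of Rel2.aa

lemma BB : B * B = B := by
  rw [B, ← map_mul]; exact rel_of Rel2.bb

lemma ABAB : A * B * (A * B) = A * B := by
  rw [A, B]; simp only [← map_mul]; exact rel_of Rel2.abab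

lemma BABA : B * A * (B * A) = B * A := by
  rw [A, B]; simp only [← map_mul]; exact rel_of Rel2.baba

lemma AAx (x : O2) : A * (A * x) = A * x := by rw [← mul_assoc, AA]
lemma BBx (x : O2) : B * (B * x) = B * x := by rw [← mul_assoc, BB]
lemma ABAB' : A * (B * (A * B)) = A * B := by rw [← mul_assoc, ABAB]
lemma BABA' : B * (A * (B * A)) = B * A := by rw [← mul_assoc, BABA]
lemma ABABx (x : O2) : A * (B * (A * (B * x))) = A * (B * x) := by
  have h : A * (B * (A * (B * x))) = (A * B * (A * B)) * x := by simp [mul_assoc]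
  rw [h, ABAB, mul_assoc]
lemma BABAx (x : O2) : B * (A * (B * (A * x))) = B * (A * x) := by
  have h : B * (A * (B * (A * x))) = (B * A * (B * A)) * x := by simp [mul_assoc]
  rw [h, BABA, mul_assoc]

/-- A concrete 7-element monoid modeling `O₂`. -/
inductive M : Type
  | e | a | b | ab | ba | aba | bab
deriving DecidableEq

instance : Fintype M :=
  Fintype.ofList [.e, .a, .b, .ab, .ba, .aba, .bab] (by intro x; cases x <;> decide)

def M.mul : M → M → M
  | .e, .e => .e
  | .e, .a => .a
  | .e, .b => .b
  | .e, .ab => .ab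
  | .e, .ba => .ba
  | .e, .aba => .aba
  | .e, .bab => .bab
  | .a, .e => .a
  | .a, .a => .a
  | .a, .b => .ab
  | .a, .ab => .ab
  | .a, .ba => .aba
  | .a, .aba => .aba
  | .a, .bab => .ab
  | .b, .e => .b
  | .b, .a => .ba
  | .b, .b => .b
  | .b, .ab => .bab
  | .b, .ba => .ba
  | .b, .aba => .ba
  | .b, .bab => .bab
  | .ab, .e => .ab
  | .ab, .a => .aba
  | .ab, .b => .ab
  | .ab, .ab => .ab
  | .ab, .ba => .aba
  | .ab, .aba => .aba
  | .ab, .bab => .ab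
  | .ba, .e => .ba
  | .ba, .a => .ba
  | .ba, .b => .bab
  | .ba, .ab => .bab
  | .ba, .ba => .ba
  | .ba, .aba => .ba
  | .ba, .bab => .bab
  | .aba, .e => .aba
  | .aba, .a => .aba
  | .aba, .b => .ab
  | .aba, .ab => .ab
  | .aba, .ba => .aba
  | .aba, .aba => .aba
  | .aba, .bab => .ab
  | .bab, .e => .bab
  | .bab, .a => .ba
  | .bab, .b => .bab
  | .bab, .ab => .bab
  | .bab, .ba => .ba
  | .bab, .aba => .ba
  | .bab, .bab => .bab

instance : Monoid M where
  mul := M.mul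
  one := M.e
  one_mul := by intro x; cases x <;> rfl
  mul_one := by intro x; cases x <;> rfl
  mul_assoc := by decide

def f2 : FreeMonoid G2 →* M :=
  FreeMonoid.lift (fun g => match g with | G2.a => M.a | G2.b => M.b)

lemma con2_le : con2 ≤ Con.ker f2 := by
  rw [con2]
  apply Con.conGen_le.mpr
  rintro x y h
  cases h <;> simp [Con.ker_rel, f2] <;> rfl

/-- The homomorphism `O₂ →* M`. -/
def φ : O2 →* M := con2.lift f2 con2_le

lemma φA : φ A = M.a := by
  rw [A, φ, Con.lift_mk']; simp [f2]
lemma φB : φ B = M.b := by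
  rw [B, φ, Con.lift_mk']; simp [f2]
lemma φ1 : φ (1 : O2) = M.e := map_one φ

lemma mem_list (x : O2) :
    x ∈ ([1, A, B, A * B, B * A, A * B * A, B * A * B] : List O2) := by
  induction x using Con.induction_on with
  | H w =>
    change con2.mk' w ∈ _
    induction w using FreeMonoid.recOn with
    | one => simp [map_one]
    | of_mul g t iht =>
      rw [map_mul]
      have hg : con2.mk' (of g) = A ∨ con2.mk' (of g) = B := by
        cases g
        · exact Or.inl rfl
        · exact Or.inr rfl
      simp only [List.mem_cons, List.not_mem_nil, or_false] at iht ⊢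
      rcases hg with hg | hg <;> rw [hg] <;>
        rcases iht with h | h | h | h | h | h | h <;> rw [h] <;>
        simp [mul_assoc, AA, BB, AAx, BBx, ABAB', BABA', ABABx, BABAx, mul_one]

/-- The inverse map. -/
def ψ : M → O2
  | .e => 1
  | .a => A
  | .b => B
  | .ab => A * B
  | .ba => B * A
  | .aba => A * B * A
  | .bab => B * A * B

lemma left_inv : Function.LeftInverse ψ φ := by
  intro x
  have := mem_list x
  simp only [List.mem_cons, List.not_mem_nil, or_false] at this
  rcases this with h | h | h | h | h | h | h <;> subst h <;>
    simp [map_mul, φA, φB, φ1, ψ] <;> rfl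

lemma right_inv : Function.RightInverse ψ φ := by
  intro m
  cases m <;> simp [ψ, map_mul, φA, φB, φ1] <;> decide

lemma φ_bij : Function.Bijective φ :=
  ⟨left_inv.injective, right_inv.surjective⟩

end OrigamiTwo

open OrigamiTwo in
/-- The nonidentity elements of `O₂` are exactly
`α₁, β₁, α₁β₁, β₁α₁, α₁β₁α₁, β₁α₁β₁`, these six elements are pairwise distinct,
and hence `|O₂| = 7`. -/
theorem origami_two_elements :
    ({x : O2 | x ≠ 1} = {A, B, A * B, B * A, A * B * A, B * A * B}) ∧
    ([A, B, A * B, B * A, A * B * A, B * A * B] : List O2).Nodup ∧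
    Nat.card O2 = 7 := by
  have hmap : ([A, B, A * B, B * A, A * B * A, B * A * B] : List O2).map φ
      = [M.a, M.b, M.ab, M.ba, M.aba, M.bab] := by
    simp only [List.map_cons, List.map_nil, map_mul, φA, φB]
    decide
  have hnodup : ([A, B, A * B, B * A, A * B * A, B * A * B] : List O2).Nodup := by
    have : (([A, B, A * B, B * A, A * B * A, B * A * B] : List O2).map φ).Nodup := by
      rw [hmap]; decide
    exact this.of_map φ
  refine ⟨?_, hnodup, ?_⟩
  · ext x
    simp only [Set.mem_setOf_eq, Set.mem_insert_iff, Set.mem_singleton_iff]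
    constructor
    · intro hx
      have := mem_list x
      simp only [List.mem_cons, List.not_mem_nil, or_false] at this
      tauto
    · rintro (h | h | h | h | h | h) <;> subst h <;> intro h1 <;>
        apply_fun φ at h1 <;> simp only [map_mul, φA, φB, φ1] at h1 <;>
        exact absurd h1 (by decide)
  · rw [Nat.card_eq_of_bijective φ φ_bij, Nat.card_eq_fintype_card]
    rfl
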